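/- Let φ : X → ℝ be continuous on X = 𝒜^(ℤ^d) and let β_c ∈ ℝ. Then φ has a freezing phase transition at β_c if and only if the pressure function p_φ is affine on [β_c, ∞) (i.e., there exist a, b ∈ ℝ with p_φ(β) = aβ + b for all β ≥ β_c) and p_φ is not affine on [β, ∞) for any β < β_c. Moreover, in this case p_φ(β) = s_φ β + h_φ for all β ≥ β_c. -/

import Mathlib

open MeasureTheory Filter Topology
open scoped ENNReal Classical

namespace Freezing

/-- The configuration space `X = 𝒜^(ℤ^d)`. -/
abbrev Cfg (d : ℕ) (A : Type) : Type := (Fin d → ℤ) → A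

section Defs

variable {d : ℕ} {A : Type} [Fintype A] [TopologicalSpace A] [DiscreteTopology A]
  [MeasurableSpace A] [BorelSpace A]

/-- The shift action: `(σ^n x)_m = x_{n+m}`. -/
def shift (n : Fin d → ℤ) (x : Cfg d A) : Cfg d A := fun m => x (n + m)

/-- Shift-invariance of a measure. -/
def Invariant (μ : Measure (Cfg d A)) : Prop :=
  ∀ n : Fin d → ℤ, Measure.map (shift n) μ = μ

/-- Cylinder set `[w]` for a pattern `w` on `E_n = ([0,n-1] ∩ ℤ)^d`. -/
def cylE (n : ℕ) (w : (Fin d → Fin n) → A) : Set (Cfg d A) :=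
  { x | ∀ m : Fin d → Fin n, x (fun i => ((m i : ℕ) : ℤ)) = w m }

/-- Measure-theoretic entropy `h(μ) = inf_{n ≥ 1} n^{-d} Σ_w (-μ[w] log μ[w])`. -/
noncomputable def entropy (μ : Measure (Cfg d A)) : ℝ :=
  ⨅ n : {n : ℕ // 1 ≤ n},
    ((n.1 : ℝ) ^ d)⁻¹ *
      ∑ w : (Fin d → Fin n.1) → A, Real.negMulLog (μ (cylE n.1 w)).toReal

/-- Pressure `p_φ(β) = sup { h(μ) + β ∫ φ dμ }` over shift-invariant probability measures. -/
noncomputable def pressure (φ : Cfg d A → ℝ) (β : ℝ) : ℝ :=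
  sSup { r | ∃ μ : Measure (Cfg d A), IsProbabilityMeasure μ ∧ Invariant μ ∧
    r = entropy μ + β * ∫ x, φ x ∂μ }

/-- The set of equilibrium states of `βφ`. -/
def ES (φ : Cfg d A → ℝ) (β : ℝ) : Set (Measure (Cfg d A)) :=
  { μ | IsProbabilityMeasure μ ∧ Invariant μ ∧
      entropy μ + β * ∫ x, φ x ∂μ = pressure φ β }

/-- `φ` has a freezing phase transition at `βc`. -/
def FreezingPT (φ : Cfg d A → ℝ) (βc : ℝ) : Prop :=
  (∀ β β' : ℝ, βc < β → βc < β' → ES φ β = ES φ β') ∧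
  (∀ β β' : ℝ, β < βc → βc < β' → ES φ β ≠ ES φ β')

/-- `s_φ = sup { ∫ φ dμ }` over shift-invariant probability measures. -/
noncomputable def sPhi (φ : Cfg d A → ℝ) : ℝ :=
  sSup { r | ∃ μ : Measure (Cfg d A), IsProbabilityMeasure μ ∧ Invariant μ ∧
    r = ∫ x, φ x ∂μ }

/-- The set of maximizing measures of `φ`. -/
def MM (φ : Cfg d A → ℝ) : Set (Measure (Cfg d A)) :=
  { μ | IsProbabilityMeasure μ ∧ Invariant μ ∧ (∫ x, φ x ∂μ) = sPhi φ }

/-- `h_φ = sup { h(η) : η ∈ MM(φ) }`. -/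
noncomputable def hPhi (φ : Cfg d A → ℝ) : ℝ :=
  sSup { r | ∃ μ ∈ MM φ, r = entropy μ }

/-- The zero-temperature accumulation points of `φ`. -/
def ZTA (φ : Cfg d A → ℝ) : Set (Measure (Cfg d A)) :=
  { μ | IsProbabilityMeasure μ ∧ Invariant μ ∧
      ∃ (β : ℕ → ℝ) (μs : ℕ → Measure (Cfg d A)),
        Tendsto β atTop atTop ∧ (∀ k, μs k ∈ ES φ (β k)) ∧
        ∀ f : Cfg d A → ℝ, Continuous f →
          Tendsto (fun k => ∫ x, f x ∂(μs k)) atTop (𝓝 (∫ x, f x ∂μ)) }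

/-- A subshift: nonempty, closed, invariant under every shift. -/
def IsSubshift (X₀ : Set (Cfg d A)) : Prop :=
  X₀.Nonempty ∧ IsClosed X₀ ∧ ∀ n : Fin d → ℤ, ∀ x ∈ X₀, shift n x ∈ X₀

/-- The language `L_{E_n}(X₀)`: patterns on `E_n` appearing at the origin of points of `X₀`. -/
def langE (X₀ : Set (Cfg d A)) (n : ℕ) : Set ((Fin d → Fin n) → A) :=
  { w | ∃ x ∈ X₀, ∀ m : Fin d → Fin n, x (fun i => ((m i : ℕ) : ℤ)) = w m }

/-- Topological entropy `h_top(X₀) = inf_{n ≥ 1} n^{-d} log |L_{E_n}(X₀)|`. -/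
noncomputable def topEnt (X₀ : Set (Cfg d A)) : ℝ :=
  ⨅ n : {n : ℕ // 1 ≤ n}, ((n.1 : ℝ) ^ d)⁻¹ * Real.log ((langE X₀ n.1).ncard)

/-- A measure of maximal entropy on the subshift `X₀`. -/
def IsMME (X₀ : Set (Cfg d A)) (μ : Measure (Cfg d A)) : Prop :=
  IsProbabilityMeasure μ ∧ Invariant μ ∧ μ X₀ = 1 ∧ entropy μ = topEnt X₀

/-- Ergodicity: invariant Borel sets have measure `0` or `1`. -/
def ErgodicInv (μ : Measure (Cfg d A)) : Prop :=
  ∀ s : Set (Cfg d A), MeasurableSet s → (∀ n : Fin d → ℤ, shift n ⁻¹' s = s) →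
    μ s = 0 ∨ μ s = 1

/-- The `n`-th variation `var_n φ`, over pairs agreeing on `B_n = ([-n,n] ∩ ℤ)^d`. -/
noncomputable def varPot (φ : Cfg d A → ℝ) (n : ℕ) : ℝ :=
  sSup { r | ∃ x y : Cfg d A,
    (∀ m : Fin d → ℤ, (∀ i, |m i| ≤ (n : ℤ)) → x m = y m) ∧ r = |φ x - φ y| }

/-- Sup-norm `‖m‖_∞` of a site `m ∈ ℤ^d`. -/
def supNorm (m : Fin d → ℤ) : ℕ := Finset.univ.sup fun i => (m i).natAbs

/-- The metric `dist(x,y) = 2^{-min{‖n‖_∞ : x_n ≠ y_n}}`. -/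
noncomputable def cfgDist (x y : Cfg d A) : ℝ :=
  if x = y then 0
  else (2 : ℝ) ^
    (-((sInf { k : ℕ | ∃ m : Fin d → ℤ, supNorm m = k ∧ x m ≠ y m } : ℕ) : ℤ))

/-- Distance from a point to a subshift. -/
noncomputable def distToSub (X₀ : Set (Cfg d A)) (x : Cfg d A) : ℝ :=
  sInf { r | ∃ y ∈ X₀, r = cfgDist x y }

end Defs


set_option linter.unusedSectionVars false
set_option maxHeartbeats 1000000
open TopologicalSpace
open scoped NNReal

section Aux
variable {d : ℕ} {A : Type} [Fintype A] [TopologicalSpace A] [DiscreteTopology A]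
  [MeasurableSpace A] [BorelSpace A]
abbrev BIdx (d n : ℕ) : Type := Fin d → (Finset.Icc (-(n:ℤ)) (n:ℤ) : Finset ℤ)
def res (n : ℕ) (x : Cfg d A) : BIdx d n → A := fun b => x (fun i => (b i : ℤ))
def cylB (n : ℕ) (w : BIdx d n → A) : Set (Cfg d A) := {x | res n x = w}
def resP {n n' : ℕ} (h : n ≤ n') (w : BIdx d n' → A) : BIdx d n → A :=
  fun b => w (fun i => ⟨(b i : ℤ), by
    have := (b i).2; simp only [Finset.mem_Icc] at this ⊢; omega⟩)
lemma resP_res {n n' : ℕ} (h : n ≤ n') (x : Cfg d A) : resP h (res n' x) = res n x := rfl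
noncomputable def sec [Inhabited A] (n : ℕ) (w : BIdx d n → A) : Cfg d A := fun m =>
  if h : ∀ i, m i ∈ Finset.Icc (-(n:ℤ)) (n:ℤ) then w (fun i => ⟨m i, h i⟩) else default
lemma res_sec [Inhabited A] (n : ℕ) (w : BIdx d n → A) : res n (sec n w) = w := by
  funext b
  show sec n w (fun i => (b i : ℤ)) = w b
  rw [sec, dif_pos (fun i => (b i).2)]

lemma continuous_res (n : ℕ) : Continuous (res (d := d) (A := A) n) :=
  continuous_pi fun _ => continuous_apply _

lemma isClopen_cylB (n : ℕ) (w : BIdx d n → A) : IsClopen (cylB n w) := by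
  have : DiscreteTopology (BIdx d n → A) := inferInstance
  have h : cylB n w = res n ⁻¹' {w} := rfl
  rw [h]
  exact (isClopen_discrete {w}).preimage (continuous_res n)

lemma isCompact_cylB (n : ℕ) (w : BIdx d n → A) : IsCompact (cylB n w) :=
  (isClopen_cylB n w).isClosed.isCompact

lemma measurableSet_cylB (n : ℕ) (w : BIdx d n → A) : MeasurableSet (cylB n w) :=
  (isClopen_cylB n w).isOpen.measurableSet

lemma mem_cylB_res (n : ℕ) (x : Cfg d A) : x ∈ cylB n (res n x) := rfl

/-- restriction of a pattern to a smaller box -/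

lemma cylB_subset {n n' : ℕ} (h : n ≤ n') (x : Cfg d A) :
    cylB n' (res n' x) ⊆ cylB n (res n x) := by
  intro y hy
  have : res n' y = res n' x := hy
  show res n y = res n x
  rw [← resP_res h, ← resP_res h x, this]

/-- basic nbhd lemma -/
lemma nbhd_cyl {U : Set (Cfg d A)} (hU : IsOpen U) {x : Cfg d A} (hx : x ∈ U) :
    ∃ n : ℕ, cylB n (res n x) ⊆ U := by
  obtain ⟨I, u, hIu, hsub⟩ := isOpen_pi_iff.mp hU x hx
  obtain ⟨n, hn⟩ : ∃ n : ℕ, ∀ m ∈ I, ∀ i, |m i| ≤ (n : ℤ) := by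
    classical
    classical
    set g : (Fin d → ℤ) → ℕ := fun m' => Finset.univ.sup fun i => (m' i).natAbs with hg
    refine ⟨I.sup g, fun m hm i => ?_⟩
    have h2 : (m i).natAbs ≤ g m :=
      Finset.le_sup (f := fun j => (m j).natAbs) (Finset.mem_univ i)
    have h1 : g m ≤ I.sup g := Finset.le_sup hm
    rw [abs_le]; omega
  refine ⟨n, fun y hy => hsub ?_⟩
  intro m hm
  have hco : y m = x m := by
    have h2 : ∀ i, m i ∈ Finset.Icc (-(n:ℤ)) (n:ℤ) := by
      intro i; simp only [Finset.mem_Icc]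
      have := hn m hm i; rw [abs_le] at this; omega
    have := congrFun (hy : res n y = res n x) (fun i => ⟨m i, h2 i⟩)
    simpa [res] using this
  rw [hco]
  exact (hIu m hm).2

/-- engine: compact inside open can be saturated at some resolution -/
lemma engine {K U : Set (Cfg d A)} (hK : IsCompact K) (hU : IsOpen U) (hKU : K ⊆ U) :
    ∃ N : ℕ, ∀ n, N ≤ n → res n ⁻¹' (res n '' K) ⊆ U := by
  classical
  have hcov : ∀ x : K, ∃ n : ℕ, cylB n (res n (x : Cfg d A)) ⊆ U :=
    fun x => nbhd_cyl hU (hKU x.2)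
  choose nx hnx using hcov
  obtain ⟨t, ht⟩ := hK.elim_finite_subcover (fun x : K => cylB (nx x) (res (nx x) (x : Cfg d A)))
    (fun x => (isClopen_cylB _ _).isOpen)
    (by intro y hy
        exact Set.mem_iUnion.2 ⟨⟨y, hy⟩, mem_cylB_res _ _⟩)
  refine ⟨t.sup nx, fun n hn y hy => ?_⟩
  obtain ⟨x, hxK, hxy⟩ := hy
  obtain ⟨c, hct, hc⟩ := Set.mem_iUnion₂.mp (ht hxK)
  have hnc : nx c ≤ n := le_trans (Finset.le_sup hct) hn
  -- res (nx c) y = res (nx c) x = res (nx c) c-pattern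
  have h1 : res (nx c) y = res (nx c) x := by
    rw [← resP_res hnc, ← resP_res hnc x, hxy]
  have h2 : res (nx c) x = res (nx c) (c : Cfg d A) := hc
  exact hnx c (by show res (nx c) y = _; rw [h1, h2])

lemma exists_level {C : Set (Cfg d A)} (hC : IsCompact C) (hCo : IsOpen C) :
    ∃ N : ℕ, ∀ n, N ≤ n → C = res n ⁻¹' (res n '' C) := by
  obtain ⟨N, hN⟩ := engine hC hCo (subset_refl C)
  exact ⟨N, fun n hn => Set.Subset.antisymm (Set.subset_preimage_image _ _) (hN n hn)⟩


lemma cylB_disjoint {n : ℕ} {w w' : BIdx d n → A} (h : w ≠ w') :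
    Disjoint (cylB n w) (cylB n w') := by
  rw [Set.disjoint_left]
  rintro x (hx : res n x = w) (hx' : res n x = w')
  exact h (hx ▸ hx')

/-- decomposition of a cylinder into finer cylinders -/
lemma measure_cylB_eq_sum (η : Measure (Cfg d A)) {n n' : ℕ} (h : n ≤ n') (w : BIdx d n → A) :
    η (cylB n w) = ∑ w' ∈ Finset.univ.filter (fun w' => resP h w' = w), η (cylB n' w') := by
  classical
  rw [← measure_biUnion_finset]
  · congr 1
    ext x
    simp only [Set.mem_iUnion, Finset.mem_filter, Finset.mem_univ, true_and]
    constructor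
    · intro hx
      exact ⟨res n' x, by rw [resP_res h]; exact hx, rfl⟩
    · rintro ⟨w', hw', (hx : res n' x = w')⟩
      show res n x = w
      rw [← resP_res h x, hx, hw']
  · intro a _ b _ hab
    exact cylB_disjoint hab
  · exact fun b _ => measurableSet_cylB _ _

lemma measure_univ_eq_sum (η : Measure (Cfg d A)) (n : ℕ) :
    η Set.univ = ∑ w : BIdx d n → A, η (cylB n w) := by
  classical
  rw [← measure_biUnion_finset (f := fun w => cylB n w)
      (fun a _ b _ hab => cylB_disjoint hab) (fun b _ => measurableSet_cylB _ _)]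
  congr 1
  ext x
  constructor
  · intro _
    exact Set.mem_iUnion₂.2 ⟨res n x, Finset.mem_univ _, (rfl : res n x = res n x)⟩
  · intro _; trivial

section Cont
variable [Inhabited A] (v : ∀ n : ℕ, (BIdx d n → A) → ℝ)

/-- finite set of box-patterns of a set -/
noncomputable def imF (n : ℕ) (K : Set (Cfg d A)) : Finset (BIdx d n → A) :=
  (Set.toFinite (res n '' K)).toFinset

lemma mem_imF {n : ℕ} {K : Set (Cfg d A)} {w : BIdx d n → A} :
    w ∈ imF n K ↔ ∃ x ∈ K, res n x = w := by
  simp [imF, Set.Finite.mem_toFinset, Set.mem_image]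

noncomputable def cseq (K : Set (Cfg d A)) (n : ℕ) : ℝ := ∑ w ∈ imF n K, v n w

variable (hv0 : ∀ n w, 0 ≤ v n w)
  (hvc : ∀ {n n' : ℕ} (h : n ≤ n') (w : BIdx d n → A),
    v n w = ∑ w' ∈ Finset.univ.filter (fun w' => resP h w' = w), v n' w')

include hv0 in
lemma cseq_nonneg (K : Set (Cfg d A)) (n : ℕ) : 0 ≤ cseq v K n :=
  Finset.sum_nonneg fun w _ => hv0 n w

include hv0 hvc in
lemma cseq_antitone (K : Set (Cfg d A)) : Antitone (cseq v K) := by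
  intro n n' h
  classical
  have hsum : cseq v K n = ∑ w ∈ imF n K,
      ∑ w' ∈ Finset.univ.filter (fun w' => resP h w' = w), v n' w' :=
    Finset.sum_congr rfl fun w _ => hvc h w
  rw [hsum, ← Finset.sum_biUnion]
  · refine Finset.sum_le_sum_of_subset_of_nonneg ?_ (fun w' _ _ => hv0 n' w')
    intro w' hw'
    obtain ⟨x, hx, hxw⟩ := mem_imF.mp hw'
    refine Finset.mem_biUnion.2 ⟨res n x, mem_imF.2 ⟨x, hx, rfl⟩, ?_⟩
    simp only [Finset.mem_filter, Finset.mem_univ, true_and]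
    rw [← hxw, resP_res]
  · intro a _ b _ hab
    simp only [Finset.disjoint_left, Finset.mem_filter, Finset.mem_univ, true_and]
    rintro w' h1 h2
    exact hab (h1 ▸ h2)

include hv0 in
lemma cseq_mono {K₁ K₂ : Set (Cfg d A)} (h : K₁ ⊆ K₂) (n : ℕ) : cseq v K₁ n ≤ cseq v K₂ n := by
  refine Finset.sum_le_sum_of_subset_of_nonneg ?_ (fun w _ _ => hv0 n w)
  intro w hw
  obtain ⟨x, hx, hxw⟩ := mem_imF.mp hw
  exact mem_imF.2 ⟨x, h hx, hxw⟩

lemma imF_union (n : ℕ) (K₁ K₂ : Set (Cfg d A)) :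
    imF n (K₁ ∪ K₂) = imF n K₁ ∪ imF n K₂ := by
  classical
  ext w
  simp only [mem_imF, Finset.mem_union, Set.mem_union]
  constructor
  · rintro ⟨x, hx | hx, hxw⟩
    · exact Or.inl ⟨x, hx, hxw⟩
    · exact Or.inr ⟨x, hx, hxw⟩
  · rintro (⟨x, hx, hxw⟩ | ⟨x, hx, hxw⟩)
    exacts [⟨x, Or.inl hx, hxw⟩, ⟨x, Or.inr hx, hxw⟩]

include hv0 in
lemma cseq_union_le (K₁ K₂ : Set (Cfg d A)) (n : ℕ) :
    cseq v (K₁ ∪ K₂) n ≤ cseq v K₁ n + cseq v K₂ n := by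
  classical
  unfold cseq
  rw [imF_union]
  have := Finset.sum_union_inter (s₁ := imF n K₁) (s₂ := imF n K₂) (f := fun w => v n w)
  have h2 : 0 ≤ ∑ w ∈ imF n K₁ ∩ imF n K₂, v n w :=
    Finset.sum_nonneg fun w _ => hv0 n w
  linarith

noncomputable def cinf (K : Set (Cfg d A)) : ℝ := ⨅ n, cseq v K n

include hv0 in
lemma cseq_bddBelow (K : Set (Cfg d A)) : BddBelow (Set.range (cseq v K)) :=
  ⟨0, by rintro r ⟨n, rfl⟩; exact cseq_nonneg v hv0 K n⟩

include hv0 hvc in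
lemma cinf_tendsto (K : Set (Cfg d A)) :
    Tendsto (cseq v K) atTop (𝓝 (cinf v K)) :=
  tendsto_atTop_ciInf (cseq_antitone v hv0 hvc K) (cseq_bddBelow v hv0 K)

include hv0 in
lemma cinf_nonneg (K : Set (Cfg d A)) : 0 ≤ cinf v K :=
  le_ciInf fun n => cseq_nonneg v hv0 K n


include hv0 hvc in
lemma cinf_union_le (K₁ K₂ : Set (Cfg d A)) :
    cinf v (K₁ ∪ K₂) ≤ cinf v K₁ + cinf v K₂ := by
  refine le_of_tendsto_of_tendsto' (cinf_tendsto v hv0 hvc (K₁ ∪ K₂))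
    ((cinf_tendsto v hv0 hvc K₁).add (cinf_tendsto v hv0 hvc K₂)) ?_
  exact fun n => cseq_union_le v hv0 K₁ K₂ n

include hv0 in
lemma cinf_mono {K₁ K₂ : Set (Cfg d A)} (h : K₁ ⊆ K₂) : cinf v K₁ ≤ cinf v K₂ :=
  ciInf_mono (cseq_bddBelow v hv0 K₁) (cseq_mono v hv0 h)

include hv0 hvc in
lemma cinf_union_disjoint {K₁ K₂ : Set (Cfg d A)} (hK₁ : IsCompact K₁) (hc : IsClosed K₂)
    (hdis : Disjoint K₁ K₂) :
    cinf v (K₁ ∪ K₂) = cinf v K₁ + cinf v K₂ := by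
  classical
  obtain ⟨N, hN⟩ := engine hK₁ hc.isOpen_compl (Set.disjoint_left.mp hdis)
  refine tendsto_nhds_unique (cinf_tendsto v hv0 hvc (K₁ ∪ K₂)) ?_
  have heq : ∀ n, N ≤ n → cseq v (K₁ ∪ K₂) n = cseq v K₁ n + cseq v K₂ n := by
    intro n hn
    unfold cseq
    rw [imF_union, Finset.sum_union]
    simp only [Finset.disjoint_left, mem_imF]
    rintro w ⟨x, hx, hxw⟩ ⟨y, hy, hyw⟩
    have : y ∈ res n ⁻¹' (res n '' K₁) := ⟨x, hx, by rw [hxw, hyw]⟩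
    exact hN n hn this hy
  refine Tendsto.congr' ?_ ((cinf_tendsto v hv0 hvc K₁).add (cinf_tendsto v hv0 hvc K₂))
  filter_upwards [eventually_ge_atTop N] with n hn
  exact (heq n hn).symm

/-- the limit content -/
noncomputable def limCont : Content (Cfg d A) where
  toFun K := Real.toNNReal (cinf v K)
  mono' K₁ K₂ h := Real.toNNReal_mono (cinf_mono v hv0 h)
  sup_disjoint' K₁ K₂ hdis h₁ h₂ := by
    simp only [Compacts.coe_sup]
    rw [← Real.toNNReal_add (cinf_nonneg v hv0 _) (cinf_nonneg v hv0 _)]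
    exact congrArg Real.toNNReal (cinf_union_disjoint v hv0 hvc K₁.2 h₂ hdis)
  sup_le' K₁ K₂ := by
    simp only [Compacts.coe_sup]
    rw [← Real.toNNReal_add (cinf_nonneg v hv0 _) (cinf_nonneg v hv0 _)]
    exact Real.toNNReal_mono (cinf_union_le v hv0 hvc K₁ K₂)

include hv0 hvc in
lemma cinf_eq_cseq {K : Set (Cfg d A)} {N : ℕ}
    (hconst : ∀ n, N ≤ n → cseq v K n = cseq v K N) : cinf v K = cseq v K N := by
  refine le_antisymm (ciInf_le (cseq_bddBelow v hv0 K) N) (le_ciInf fun n => ?_)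
  rcases le_total n N with h | h
  · exact (cseq_antitone v hv0 hvc K) h
  · exact le_of_eq (hconst n h).symm

include hv0 hvc in
lemma cseq_const_of_level {C : Set (Cfg d A)} {N : ℕ}
    (hN : C = res N ⁻¹' (res N '' C)) :
    ∀ n, N ≤ n → cseq v C n = cseq v C N := by
  classical
  intro n hn
  have himF : imF n C = Finset.univ.filter (fun w' => resP hn w' ∈ imF N C) := by
    ext w'
    simp only [mem_imF, Finset.mem_filter, Finset.mem_univ, true_and]
    constructor
    · rintro ⟨x, hx, rfl⟩
      exact ⟨x, hx, (resP_res hn x)⟩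
    · intro hw'
      obtain ⟨x₀, hx₀, hx₀w⟩ := hw'
      refine ⟨sec n w', ?_, res_sec n w'⟩
      rw [hN]
      have hkey : resP hn (res n (sec n w')) = res N (sec n w') := resP_res hn _
      rw [res_sec] at hkey
      exact ⟨x₀, hx₀, hx₀w.trans hkey⟩
  have hsplit : Finset.univ.filter (fun w' => resP hn w' ∈ imF N C) =
      (imF N C).biUnion (fun w => Finset.univ.filter (fun w' => resP hn w' = w)) := by
    ext w'
    simp only [Finset.mem_filter, Finset.mem_univ, true_and, Finset.mem_biUnion]
    constructor
    · intro h; exact ⟨resP hn w', h, rfl⟩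
    · rintro ⟨w, hw, h⟩; rw [h]; exact hw
  unfold cseq
  rw [himF, hsplit, Finset.sum_biUnion]
  · exact (Finset.sum_congr rfl fun w _ => (hvc hn w).symm)
  · intro a _ b _ hab
    simp only [Finset.disjoint_left, Finset.mem_filter, Finset.mem_univ, true_and]
    rintro w' h1 h2
    exact hab (h1 ▸ h2)

include hv0 hvc in
lemma limCont_measure_eq {C : Set (Cfg d A)} (hC : IsCompact C) (hCo : IsOpen C) {N : ℕ}
    (hN : C = res N ⁻¹' (res N '' C)) :
    (limCont v hv0 hvc).measure C = ENNReal.ofReal (cseq v C N) := by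
  rw [Content.measure_apply _ hCo.measurableSet,
    (limCont v hv0 hvc).outerMeasure_of_isOpen C hCo,
    Content.innerContent_of_isCompact _ hC hCo]
  show (((Real.toNNReal (cinf v C)) : ℝ≥0) : ℝ≥0∞) = _
  rw [cinf_eq_cseq v hv0 hvc (cseq_const_of_level v hv0 hvc hN)]
  rfl

end Cont


section Seq
lemma continuous_shift (s : Fin d → ℤ) : Continuous (shift (d := d) (A := A) s) :=
  continuous_pi fun _ => continuous_apply _

lemma cfam_piSystem : IsPiSystem {s : Set (Cfg d A) | ∃ n x, s = cylB n (res n x)} := by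
  rintro s ⟨n, x, rfl⟩ t ⟨n', y, rfl⟩ hne
  obtain ⟨z, (hz1 : res n z = res n x), (hz2 : res n' z = res n' y)⟩ := hne
  rcases le_total n n' with h | h
  · refine ⟨n', z, ?_⟩
    apply Set.Subset.antisymm
    · rintro u ⟨(hu1 : res n u = res n x), (hu2 : res n' u = res n' y)⟩
      show res n' u = res n' z
      rw [hu2, hz2]
    · rintro u (hu : res n' u = res n' z)
      constructor
      · show res n u = res n x
        rw [← resP_res h u, hu, resP_res h z, hz1]
      · show res n' u = res n' y
        rw [hu, hz2]
  · refine ⟨n, z, ?_⟩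
    apply Set.Subset.antisymm
    · rintro u ⟨(hu1 : res n u = res n x), (hu2 : res n' u = res n' y)⟩
      show res n u = res n z
      rw [hu1, hz1]
    · rintro u (hu : res n u = res n z)
      constructor
      · show res n u = res n x
        rw [hu, hz1]
      · show res n' u = res n' y
        rw [← resP_res h u, hu, resP_res h z, hz2]

lemma cfam_basis :
    IsTopologicalBasis {s : Set (Cfg d A) | ∃ n x, s = cylB n (res n x)} := by
  refine isTopologicalBasis_of_isOpen_of_nhds ?_ ?_
  · rintro s ⟨n, x, rfl⟩
    exact (isClopen_cylB n _).isOpen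
  · intro x U hx hU
    obtain ⟨n, hn⟩ := nbhd_cyl hU hx
    exact ⟨cylB n (res n x), ⟨n, x, rfl⟩, mem_cylB_res n x, hn⟩

lemma generateFrom_cfam :
    (inferInstance : MeasurableSpace (Cfg d A)) =
      MeasurableSpace.generateFrom {s : Set (Cfg d A) | ∃ n x, s = cylB n (res n x)} :=
  (BorelSpace.measurable_eq).trans cfam_basis.borel_eq_generateFrom

lemma exists_limit [Inhabited A] (μs : ℕ → Measure (Cfg d A))
    (hprob : ∀ k, IsProbabilityMeasure (μs k)) (hinv : ∀ k, Invariant (μs k)) :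
    ∃ (g : ℕ → ℕ) (μ : Measure (Cfg d A)), StrictMono g ∧ IsProbabilityMeasure μ ∧ Invariant μ ∧
      ∀ C : Set (Cfg d A), IsCompact C → IsOpen C →
        Tendsto (fun k => ((μs (g k)) C).toReal) atTop (𝓝 ((μ C).toReal)) := by
  classical
  have hmem : ∀ k n (w : BIdx d n → A), ((μs k (cylB n w)).toReal) ∈ Set.Icc (0:ℝ) 1 := by
    intro k n w
    have := hprob k
    refine ⟨ENNReal.toReal_nonneg, ?_⟩
    have h1 : μs k (cylB n w) ≤ 1 := prob_le_one
    calc (μs k (cylB n w)).toReal ≤ (1 : ℝ≥0∞).toReal := ENNReal.toReal_mono (by simp) h1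
    _ = 1 := by simp
  let F : ℕ → (∀ n : ℕ, (BIdx d n → A) → (Set.Icc (0:ℝ) 1)) :=
    fun k n w => ⟨(μs k (cylB n w)).toReal, hmem k n w⟩
  obtain ⟨L, -, g, hg, hconv⟩ := isCompact_univ.tendsto_subseq (x := F) (fun k => Set.mem_univ _)
  set v : ∀ n : ℕ, (BIdx d n → A) → ℝ := fun n w => (L n w : ℝ) with hvdef
  have hcoord : ∀ n (w : BIdx d n → A),
      Tendsto (fun k => ((μs (g k) (cylB n w)).toReal)) atTop (𝓝 (v n w)) := by
    intro n w
    have h1 : Tendsto (fun k => F (g k) n w) atTop (𝓝 (L n w)) :=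
      tendsto_pi_nhds.mp ((tendsto_pi_nhds.mp hconv) n) w
    exact (continuous_subtype_val.tendsto (L n w)).comp h1
  have hv0 : ∀ n (w : BIdx d n → A), 0 ≤ v n w := fun n w => (L n w).2.1
  have hvc : ∀ {n n' : ℕ} (h : n ≤ n') (w : BIdx d n → A),
      v n w = ∑ w' ∈ Finset.univ.filter (fun w' => resP h w' = w), v n' w' := by
    intro n n' h w
    refine tendsto_nhds_unique (hcoord n w) ?_
    have hsumconv : Tendsto
        (fun k => ∑ w' ∈ Finset.univ.filter (fun w' => resP h w' = w),
          (μs (g k) (cylB n' w')).toReal) atTop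
        (𝓝 (∑ w' ∈ Finset.univ.filter (fun w' => resP h w' = w), v n' w')) :=
      tendsto_finset_sum _ (fun w' _ => hcoord n' w')
    refine Tendsto.congr (fun k => ?_) hsumconv
    rw [← ENNReal.toReal_sum (fun a _ => measure_ne_top _ _),
      ← measure_cylB_eq_sum (μs (g k)) h w]
  set μ := (limCont v hv0 hvc).measure with hμdef
  -- master convergence
  have master : ∀ C : Set (Cfg d A), IsCompact C → IsOpen C →
      (μ C ≠ ⊤ ∧ Tendsto (fun k => ((μs (g k)) C).toReal) atTop (𝓝 ((μ C).toReal))) := by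
    intro C hC hCo
    obtain ⟨N, hN⟩ := exists_level hC hCo
    have hlev : C = res N ⁻¹' (res N '' C) := hN N le_rfl
    have hμC : μ C = ENNReal.ofReal (cseq v C N) := limCont_measure_eq v hv0 hvc hC hCo hlev
    have hCdecomp : ∀ η : Measure (Cfg d A), η C = ∑ w ∈ imF N C, η (cylB N w) := by
      intro η
      have hCeq : C = ⋃ w ∈ imF N C, cylB N w := by
        ext x
        simp only [Set.mem_iUnion]
        constructor
        · intro hx
          exact ⟨res N x, mem_imF.2 ⟨x, hx, rfl⟩, rfl⟩
        · rintro ⟨w, hw, (hx : res N x = w)⟩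
          obtain ⟨y, hy, hyw⟩ := mem_imF.mp hw
          rw [hlev]
          exact ⟨y, hy, by rw [hyw, hx]⟩
      conv_lhs => rw [hCeq]
      exact measure_biUnion_finset (fun a _ b _ hab => cylB_disjoint hab)
        (fun b _ => measurableSet_cylB _ _)
    refine ⟨by rw [hμC]; exact ENNReal.ofReal_ne_top, ?_⟩
    rw [hμC, ENNReal.toReal_ofReal (cseq_nonneg v hv0 C N)]
    have hsum : Tendsto (fun k => ∑ w ∈ imF N C, (μs (g k) (cylB N w)).toReal) atTop
        (𝓝 (∑ w ∈ imF N C, v N w)) := tendsto_finset_sum _ (fun w _ => hcoord N w)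
    refine Tendsto.congr (fun k => ?_) hsum
    rw [← ENNReal.toReal_sum (fun a _ => measure_ne_top _ _), ← hCdecomp (μs (g k))]
  -- probability
  have hone : μ Set.univ = 1 := by
    have hlev : (Set.univ : Set (Cfg d A)) = res 0 ⁻¹' (res 0 '' Set.univ) := by
      apply Set.Subset.antisymm
      · intro x _
        exact ⟨x, trivial, rfl⟩
      · exact fun x _ => trivial
    have h1 : μ Set.univ = ENNReal.ofReal (cseq v Set.univ 0) :=
      limCont_measure_eq v hv0 hvc isCompact_univ isOpen_univ hlev
    have h2 : cseq v Set.univ 0 = 1 := by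
      have himF : imF (d := d) (A := A) 0 Set.univ = Finset.univ := by
        apply Finset.eq_univ_iff_forall.mpr
        intro w
        exact mem_imF.2 ⟨sec 0 w, trivial, res_sec 0 w⟩
      have hsum : Tendsto (fun k => ∑ w : BIdx d 0 → A, (μs (g k) (cylB 0 w)).toReal) atTop
          (𝓝 (∑ w : BIdx d 0 → A, v 0 w)) := tendsto_finset_sum _ (fun w _ => hcoord 0 w)
      have hconst : ∀ k, ∑ w : BIdx d 0 → A, (μs (g k) (cylB 0 w)).toReal = 1 := by
        intro k
        have := hprob (g k)
        rw [← ENNReal.toReal_sum (fun a _ => measure_ne_top _ _),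
          ← measure_univ_eq_sum (μs (g k)) 0]
        simp
      have : (1 : ℝ) = ∑ w : BIdx d 0 → A, v 0 w :=
        tendsto_nhds_unique (Tendsto.congr (fun k => (hconst k).symm) tendsto_const_nhds) hsum
      unfold cseq
      rw [himF, ← this]
    rw [h1, h2, ENNReal.ofReal_one]
  have hprobμ : IsProbabilityMeasure μ := ⟨hone⟩
  -- invariance
  have hinvμ : Invariant μ := by
    intro s₀
    have hmeas : Measurable (shift (d := d) (A := A) s₀) := (continuous_shift s₀).measurable
    haveI : IsProbabilityMeasure (Measure.map (shift s₀) μ) :=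
      Measure.isProbabilityMeasure_map hmeas.aemeasurable
    refine ext_of_generate_finite _ generateFrom_cfam cfam_piSystem ?_ ?_
    · rintro s ⟨n, x, rfl⟩
      set C := cylB n (res n x) with hCdef
      have hCclopen : IsClopen C := isClopen_cylB n _
      have hC' : IsClopen (shift s₀ ⁻¹' C) := hCclopen.preimage (continuous_shift s₀)
      rw [Measure.map_apply hmeas (measurableSet_cylB n _)]
      have h1 := master C hCclopen.isClosed.isCompact hCclopen.isOpen
      have h2 := master (shift s₀ ⁻¹' C) hC'.isClosed.isCompact hC'.isOpen
      have hseq : ∀ k, μs (g k) (shift s₀ ⁻¹' C) = μs (g k) C := by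
        intro k
        rw [← Measure.map_apply hmeas (measurableSet_cylB n _), hinv (g k) s₀]
      have heq : (μ (shift s₀ ⁻¹' C)).toReal = (μ C).toReal :=
        tendsto_nhds_unique (Tendsto.congr (fun k => congrArg ENNReal.toReal (hseq k)) h2.2) h1.2
      exact (ENNReal.toReal_eq_toReal_iff' h2.1 h1.1).mp heq
    · rw [hone]
      have := Measure.isProbabilityMeasure_map (μ := μ) hmeas.aemeasurable
      exact measure_univ
  exact ⟨g, μ, hg, hprobμ, hinvμ, fun C hC hCo => (master C hC hCo).2⟩

end Seq

end Aux

section Analytic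
variable {d : ℕ} {A : Type} [Fintype A] [TopologicalSpace A] [DiscreteTopology A]
  [MeasurableSpace A] [BorelSpace A]

lemma isClopen_cylE (n : ℕ) (w : (Fin d → Fin n) → A) : IsClopen (cylE n w) := by
  have h : cylE n w =
      ⋂ m : Fin d → Fin n, (fun x : Cfg d A => x (fun i => ((m i : ℕ) : ℤ))) ⁻¹' {w m} := by
    ext x
    simp [cylE, Set.mem_iInter]
  rw [h]
  refine ⟨isClosed_iInter fun m => ?_, isOpen_iInter_of_finite fun m => ?_⟩
  · exact (isClosed_discrete {w m}).preimage (continuous_apply _)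
  · exact (isOpen_discrete {w m}).preimage (continuous_apply _)

lemma exists_bound {φ : Cfg d A → ℝ} (hφ : Continuous φ) :
    ∃ C : ℝ, 0 ≤ C ∧ ∀ x, |φ x| ≤ C := by
  obtain ⟨C, hC⟩ := (isCompact_range hφ).isBounded.exists_norm_le
  exact ⟨max C 0, le_max_right _ _, fun x =>
    le_trans (by simpa [Real.norm_eq_abs] using hC (φ x) (Set.mem_range_self x)) (le_max_left _ _)⟩

lemma integrable_cont {φ : Cfg d A → ℝ} (hφ : Continuous φ) (η : Measure (Cfg d A))
    [IsFiniteMeasure η] : Integrable φ η := by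
  obtain ⟨C, _, hC⟩ := exists_bound hφ
  exact ⟨hφ.aestronglyMeasurable, HasFiniteIntegral.of_bounded
    (ae_of_all _ fun x => by simpa [Real.norm_eq_abs] using hC x)⟩

lemma unif {φ : Cfg d A → ℝ} (hφ : Continuous φ) {ε : ℝ} (hε : 0 < ε) :
    ∃ n : ℕ, ∀ x y : Cfg d A, res n x = res n y → |φ x - φ y| ≤ ε := by
  classical
  have hcov : ∀ x : Cfg d A, ∃ n : ℕ, ∀ y, y ∈ cylB n (res n x) → |φ y - φ x| < ε/2 := by
    intro x
    have hUopen : IsOpen {y | |φ y - φ x| < ε/2} :=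
      isOpen_lt ((hφ.sub continuous_const).abs) continuous_const
    have hx : x ∈ {y | |φ y - φ x| < ε/2} := by
      simp only [Set.mem_setOf_eq, sub_self, abs_zero]
      positivity
    obtain ⟨n, hn⟩ := nbhd_cyl hUopen hx
    exact ⟨n, fun y hy => hn hy⟩
  choose nx hnx using hcov
  obtain ⟨t, ht⟩ := isCompact_univ.elim_finite_subcover
    (fun x : Cfg d A => cylB (nx x) (res (nx x) x))
    (fun x => (isClopen_cylB _ _).isOpen)
    (fun y _ => Set.mem_iUnion.2 ⟨y, mem_cylB_res _ _⟩)
  refine ⟨t.sup nx, fun x y hxy => ?_⟩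
  obtain ⟨c, hct, hc⟩ := Set.mem_iUnion₂.mp (ht (Set.mem_univ x))
  have hnc : nx c ≤ t.sup nx := Finset.le_sup hct
  have hyx : res (nx c) y = res (nx c) x := by
    rw [← resP_res hnc, ← resP_res hnc x, hxy]
  have h1 := hnx c x hc
  have h2 := hnx c y (by show res (nx c) y = res (nx c) c; rw [hyx]; exact hc)
  have h3 : |φ x - φ y| ≤ |φ x - φ c| + |φ c - φ y| := abs_sub_le _ _ _
  rw [abs_sub_comm (φ c) (φ y)] at h3
  linarith

lemma integral_conv [Inhabited A] {φ : Cfg d A → ℝ} (hφ : Continuous φ)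
    (ν : ℕ → Measure (Cfg d A)) (hν : ∀ k, IsProbabilityMeasure (ν k))
    (μ : Measure (Cfg d A)) (hμ : IsProbabilityMeasure μ)
    (hconvC : ∀ C : Set (Cfg d A), IsCompact C → IsOpen C →
      Tendsto (fun k => ((ν k) C).toReal) atTop (𝓝 ((μ C).toReal))) :
    Tendsto (fun k => ∫ x, φ x ∂(ν k)) atTop (𝓝 (∫ x, φ x ∂μ)) := by
  classical
  rw [Metric.tendsto_atTop]
  intro ε hε
  obtain ⟨n, hn⟩ := unif hφ (show (0:ℝ) < ε/4 by positivity)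
  set ψ : Cfg d A → ℝ := fun x => φ (sec n (res n x)) with hψdef
  have hφψ : ∀ x, |φ x - ψ x| ≤ ε/4 := fun x => hn x (sec n (res n x)) (by rw [res_sec])
  have hψeq : ∀ x, ψ x =
      ∑ w : BIdx d n → A, (cylB n w).indicator (fun _ => φ (sec n w)) x := by
    intro x
    rw [Finset.sum_eq_single (res n x)]
    · rw [Set.indicator_of_mem (mem_cylB_res n x)]
    · intro w _ hw
      rw [Set.indicator_of_notMem]
      exact fun hx => hw ((hx : res n x = w) ▸ rfl)
    · intro h
      exact absurd (Finset.mem_univ _) h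
  have hψint : ∀ (η : Measure (Cfg d A)), IsProbabilityMeasure η →
      ∫ x, ψ x ∂η = ∑ w : BIdx d n → A, φ (sec n w) * ((η (cylB n w)).toReal) := by
    intro η hη
    rw [integral_congr_ae (ae_of_all _ hψeq), integral_finset_sum _
      (fun w _ => (integrable_const (φ (sec n w))).indicator (measurableSet_cylB n w))]
    refine Finset.sum_congr rfl fun w _ => ?_
    rw [integral_indicator_const _ (measurableSet_cylB n w), smul_eq_mul, mul_comm]
    rfl
  have hψintegrable : ∀ (η : Measure (Cfg d A)), IsProbabilityMeasure η → Integrable ψ η := by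
    intro η hη
    rw [show ψ = fun x => ∑ w : BIdx d n → A, (cylB n w).indicator (fun _ => φ (sec n w)) x
      from funext hψeq]
    exact integrable_finset_sum _
      (fun w _ => (integrable_const (φ (sec n w))).indicator (measurableSet_cylB n w))
  have hψconv : Tendsto (fun k => ∫ x, ψ x ∂(ν k)) atTop (𝓝 (∫ x, ψ x ∂μ)) := by
    rw [hψint μ hμ]
    refine Tendsto.congr (fun k => (hψint (ν k) (hν k)).symm) ?_
    exact tendsto_finset_sum _ (fun w _ =>
      Tendsto.const_mul _ (hconvC (cylB n w) (isCompact_cylB n w) (isClopen_cylB n w).isOpen))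
  have hdiff : ∀ (η : Measure (Cfg d A)), IsProbabilityMeasure η →
      |(∫ x, φ x ∂η) - ∫ x, ψ x ∂η| ≤ ε/4 := by
    intro η hη
    rw [← integral_sub (integrable_cont hφ η) (hψintegrable η hη)]
    have hb := norm_integral_le_of_norm_le_const (μ := η) (f := fun x => φ x - ψ x) (C := ε/4)
      (ae_of_all _ fun x => by simpa [Real.norm_eq_abs] using hφψ x)
    rw [probReal_univ] at hb
    simpa [Real.norm_eq_abs] using hb
  obtain ⟨K, hK⟩ := (Metric.tendsto_atTop.mp hψconv) (ε/4) (by positivity)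
  refine ⟨K, fun k hk => ?_⟩
  have h1 := hdiff (ν k) (hν k)
  have h2 := hdiff μ hμ
  have h3 := hK k hk
  rw [Real.dist_eq] at h3 ⊢
  have t1 : |(∫ x, φ x ∂(ν k)) - ∫ x, φ x ∂μ| ≤
      |(∫ x, φ x ∂(ν k)) - ∫ x, ψ x ∂(ν k)| + |(∫ x, ψ x ∂(ν k)) - ∫ x, φ x ∂μ| :=
    abs_sub_le _ _ _
  have t2 : |(∫ x, ψ x ∂(ν k)) - ∫ x, φ x ∂μ| ≤
      |(∫ x, ψ x ∂(ν k)) - ∫ x, ψ x ∂μ| + |(∫ x, ψ x ∂μ) - ∫ x, φ x ∂μ| :=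
    abs_sub_le _ _ _
  rw [abs_sub_comm (∫ x, ψ x ∂μ) (∫ x, φ x ∂μ)] at t2
  linarith

lemma negMulLog_le_one {x : ℝ} (h0 : 0 ≤ x) (h1 : x ≤ 1) : Real.negMulLog x ≤ 1 := by
  rcases eq_or_lt_of_le h0 with h | h
  · rw [← h, Real.negMulLog_zero]; norm_num
  · have hlog : Real.log x⁻¹ ≤ x⁻¹ - 1 := Real.log_le_sub_one_of_pos (by positivity)
    have : Real.negMulLog x = x * Real.log x⁻¹ := by
      rw [Real.log_inv, Real.negMulLog]; ring
    rw [this]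
    have hx : x * Real.log x⁻¹ ≤ x * (x⁻¹ - 1) :=
      mul_le_mul_of_nonneg_left hlog h0
    have hxx : x * (x⁻¹ - 1) = 1 - x := by field_simp
    nlinarith

end Analytic

section Press
variable {d : ℕ} {A : Type} [Fintype A] [TopologicalSpace A] [DiscreteTopology A]
  [MeasurableSpace A] [BorelSpace A]

/-- upper bound for the entropy -/
noncomputable def Hmax (d : ℕ) (A : Type) [Fintype A] : ℝ :=
  (Fintype.card ((Fin d → Fin 1) → A) : ℝ)

lemma toReal_prob_nonneg (η : Measure (Cfg d A)) (s : Set (Cfg d A)) : 0 ≤ (η s).toReal :=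
  ENNReal.toReal_nonneg

lemma toReal_prob_le_one {η : Measure (Cfg d A)} (hη : IsProbabilityMeasure η)
    (s : Set (Cfg d A)) : (η s).toReal ≤ 1 := by
  calc (η s).toReal ≤ (1 : ℝ≥0∞).toReal := ENNReal.toReal_mono (by simp) prob_le_one
  _ = 1 := by simp

/-- the `n`-th entropy term -/
noncomputable def termN (n : ℕ) (μ : Measure (Cfg d A)) : ℝ :=
  ((n : ℝ) ^ d)⁻¹ * ∑ w : (Fin d → Fin n) → A, Real.negMulLog ((μ (cylE n w)).toReal)

lemma entropy_eq (μ : Measure (Cfg d A)) :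
    entropy μ = ⨅ n : {n : ℕ // 1 ≤ n}, termN n.1 μ := rfl

lemma termN_nonneg {η : Measure (Cfg d A)} (hη : IsProbabilityMeasure η) (n : ℕ) :
    0 ≤ termN n η := by
  refine mul_nonneg (by positivity) (Finset.sum_nonneg fun w _ => ?_)
  exact Real.negMulLog_nonneg (toReal_prob_nonneg η _) (toReal_prob_le_one hη _)

lemma bddBelow_termN {η : Measure (Cfg d A)} (hη : IsProbabilityMeasure η) :
    BddBelow (Set.range fun n : {n : ℕ // 1 ≤ n} => termN n.1 η) :=
  ⟨0, by rintro r ⟨n, rfl⟩; exact termN_nonneg hη n.1⟩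

lemma entropy_nonneg {η : Measure (Cfg d A)} (hη : IsProbabilityMeasure η) :
    0 ≤ entropy η := by
  rw [entropy_eq]
  exact le_ciInf fun n => termN_nonneg hη n.1

lemma entropy_le_termN {η : Measure (Cfg d A)} (hη : IsProbabilityMeasure η)
    (n : {n : ℕ // 1 ≤ n}) : entropy η ≤ termN n.1 η := by
  rw [entropy_eq]
  exact ciInf_le (bddBelow_termN hη) n

lemma entropy_le_Hmax {η : Measure (Cfg d A)} (hη : IsProbabilityMeasure η) :
    entropy η ≤ Hmax d A := by
  refine (entropy_le_termN hη ⟨1, le_rfl⟩).trans ?_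
  unfold termN Hmax
  rw [Nat.cast_one, one_pow, inv_one, one_mul]
  calc ∑ w : (Fin d → Fin 1) → A, Real.negMulLog ((η (cylE 1 w)).toReal)
      ≤ ∑ _w : (Fin d → Fin 1) → A, (1:ℝ) := Finset.sum_le_sum fun w _ =>
        negMulLog_le_one (toReal_prob_nonneg η _) (toReal_prob_le_one hη _)
  _ = _ := by rw [Finset.sum_const, Finset.card_univ, nsmul_eq_mul, mul_one]

variable (φ : Cfg d A → ℝ)

/-- the set whose supremum is the pressure -/
def PSet (β : ℝ) : Set ℝ :=
  {r | ∃ μ : Measure (Cfg d A), IsProbabilityMeasure μ ∧ Invariant μ ∧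
    r = entropy μ + β * ∫ x, φ x ∂μ}

lemma pressure_eq (β : ℝ) : pressure φ β = sSup (PSet φ β) := rfl

lemma integral_abs_le {C : ℝ} (hC : ∀ x, |φ x| ≤ C) {η : Measure (Cfg d A)}
    (hη : IsProbabilityMeasure η) : |∫ x, φ x ∂η| ≤ C := by
  have hb := norm_integral_le_of_norm_le_const (μ := η) (f := φ) (C := C)
    (ae_of_all _ fun x => by simpa [Real.norm_eq_abs] using hC x)
  rw [probReal_univ] at hb
  simpa [Real.norm_eq_abs] using hb

lemma bddAbove_PSet (hφ : Continuous φ) (β : ℝ) : BddAbove (PSet φ β) := by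
  obtain ⟨C, hC0, hC⟩ := exists_bound hφ
  refine ⟨Hmax d A + |β| * C, ?_⟩
  rintro r ⟨μ, hμ, hinv, rfl⟩
  have h1 := entropy_le_Hmax hμ
  have h2 : β * ∫ x, φ x ∂μ ≤ |β| * C := by
    calc β * ∫ x, φ x ∂μ ≤ |β * ∫ x, φ x ∂μ| := le_abs_self _
    _ = |β| * |∫ x, φ x ∂μ| := abs_mul _ _
    _ ≤ |β| * C := mul_le_mul_of_nonneg_left (integral_abs_le φ hC hμ) (abs_nonneg β)
  linarith

lemma le_pressure (hφ : Continuous φ) {μ : Measure (Cfg d A)} (hμ : IsProbabilityMeasure μ)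
    (hinv : Invariant μ) (β : ℝ) :
    entropy μ + β * ∫ x, φ x ∂μ ≤ pressure φ β :=
  le_csSup (bddAbove_PSet φ hφ β) ⟨μ, hμ, hinv, rfl⟩

lemma pressure_le
    (hne : ∃ μ : Measure (Cfg d A), IsProbabilityMeasure μ ∧ Invariant μ) {β a : ℝ}
    (h : ∀ μ : Measure (Cfg d A), IsProbabilityMeasure μ → Invariant μ →
      entropy μ + β * ∫ x, φ x ∂μ ≤ a) :
    pressure φ β ≤ a := by
  obtain ⟨μ₀, h1, h2⟩ := hne
  refine csSup_le ⟨_, μ₀, h1, h2, rfl⟩ ?_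
  rintro r ⟨μ, hp, hi, rfl⟩
  exact h μ hp hi

lemma pressure_empty
    (hne : ¬ ∃ μ : Measure (Cfg d A), IsProbabilityMeasure μ ∧ Invariant μ) (β : ℝ) :
    pressure φ β = 0 := by
  have : PSet φ β = ∅ := by
    ext r
    simp only [PSet, Set.mem_setOf_eq, Set.mem_empty_iff_false, iff_false]
    rintro ⟨μ, h1, h2, _⟩
    exact hne ⟨μ, h1, h2⟩
  rw [pressure_eq, this, Real.sSup_empty]

lemma pressure_lipschitz (hφ : Continuous φ)
    (hne : ∃ μ : Measure (Cfg d A), IsProbabilityMeasure μ ∧ Invariant μ)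
    {C : ℝ} (hC : ∀ x, |φ x| ≤ C) (β β' : ℝ) :
    pressure φ β ≤ pressure φ β' + C * |β - β'| := by
  refine pressure_le φ hne fun μ h1 h2 => ?_
  have he : entropy μ + β * ∫ x, φ x ∂μ =
      (entropy μ + β' * ∫ x, φ x ∂μ) + (β - β') * ∫ x, φ x ∂μ := by ring
  have hb : (β - β') * ∫ x, φ x ∂μ ≤ C * |β - β'| := by
    calc (β - β') * ∫ x, φ x ∂μ ≤ |(β - β') * ∫ x, φ x ∂μ| := le_abs_self _
    _ = |β - β'| * |∫ x, φ x ∂μ| := abs_mul _ _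
    _ ≤ |β - β'| * C := mul_le_mul_of_nonneg_left (integral_abs_le φ hC h1) (abs_nonneg _)
    _ = C * |β - β'| := mul_comm _ _
  have hp := le_pressure φ hφ h1 h2 β'
  linarith

lemma pressure_convex (hφ : Continuous φ)
    (hne : ∃ μ : Measure (Cfg d A), IsProbabilityMeasure μ ∧ Invariant μ)
    {β δ t : ℝ} (ht0 : 0 ≤ t) (ht1 : t ≤ 1) :
    pressure φ (t * β + (1 - t) * δ) ≤ t * pressure φ β + (1 - t) * pressure φ δ := by
  refine pressure_le φ hne fun μ h1 h2 => ?_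
  have e1 : entropy μ + (t * β + (1 - t) * δ) * ∫ x, φ x ∂μ =
      t * (entropy μ + β * ∫ x, φ x ∂μ) + (1 - t) * (entropy μ + δ * ∫ x, φ x ∂μ) := by ring
  rw [e1]
  exact add_le_add (mul_le_mul_of_nonneg_left (le_pressure φ hφ h1 h2 β) ht0)
    (mul_le_mul_of_nonneg_left (le_pressure φ hφ h1 h2 δ) (by linarith))

lemma nonempty_A_of_prob {μ : Measure (Cfg d A)} (hμ : IsProbabilityMeasure μ) : Nonempty A := by
  by_contra h
  rw [not_nonempty_iff] at h
  have hempty : (Set.univ : Set (Cfg d A)) = ∅ := by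
    ext x
    exact (h.false (x 0)).elim
  have h1 : μ Set.univ = 1 := measure_univ
  rw [hempty, measure_empty] at h1
  exact zero_ne_one h1

lemma exists_ES {φ : Cfg d A → ℝ} (hφ : Continuous φ)
    (hne : ∃ μ₀ : Measure (Cfg d A), IsProbabilityMeasure μ₀ ∧ Invariant μ₀) (β : ℝ) :
    ∃ μ : Measure (Cfg d A), μ ∈ ES φ β := by
  classical
  obtain ⟨μ₀, hμ₀p, hμ₀i⟩ := hne
  haveI : Nonempty A := nonempty_A_of_prob hμ₀p
  haveI : Inhabited A := Classical.inhabited_of_nonempty this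
  have hPne : (PSet φ β).Nonempty := ⟨_, μ₀, hμ₀p, hμ₀i, rfl⟩
  have happrox : ∀ k : ℕ, ∃ μ : Measure (Cfg d A), IsProbabilityMeasure μ ∧ Invariant μ ∧
      pressure φ β - 1/((k:ℝ)+1) < entropy μ + β * ∫ x, φ x ∂μ := by
    intro k
    have h1 : pressure φ β - 1/((k:ℝ)+1) < pressure φ β := by
      have : (0:ℝ) < 1/((k:ℝ)+1) := by positivity
      linarith
    obtain ⟨r, ⟨μ, hp, hi, rfl⟩, hr⟩ := exists_lt_of_lt_csSup hPne h1
    exact ⟨μ, hp, hi, hr⟩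
  choose μs hp hi happ using happrox
  obtain ⟨g, μ, hg, hμp, hμi, hconvC⟩ := exists_limit μs hp hi
  have hint : Tendsto (fun k => ∫ x, φ x ∂(μs (g k))) atTop (𝓝 (∫ x, φ x ∂μ)) :=
    integral_conv hφ (fun k => μs (g k)) (fun k => hp (g k)) μ hμp hconvC
  refine ⟨μ, hμp, hμi, le_antisymm (le_pressure φ hφ hμp hμi β) ?_⟩
  have herr : Tendsto (fun k : ℕ => pressure φ β - 1/((g k : ℝ)+1)) atTop (𝓝 (pressure φ β)) := by
    have h0 : Tendsto (fun k : ℕ => 1/((g k : ℝ)+1)) atTop (𝓝 0) := by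
      refine squeeze_zero (fun k => by positivity) (fun k => ?_)
        tendsto_one_div_add_atTop_nhds_zero_nat
      have hk : (k : ℝ) ≤ (g k : ℝ) := by exact_mod_cast hg.le_apply
      apply one_div_le_one_div_of_le (by positivity)
      linarith
    simpa using (tendsto_const_nhds.sub h0)
  have hterm : ∀ n : {n : ℕ // 1 ≤ n}, pressure φ β ≤ termN n.1 μ + β * ∫ x, φ x ∂μ := by
    intro n
    have htc : Tendsto (fun k => termN n.1 (μs (g k))) atTop (𝓝 (termN n.1 μ)) := by
      unfold termN
      refine Tendsto.const_mul _ (tendsto_finset_sum _ fun w _ => ?_)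
      exact (Real.continuous_negMulLog.tendsto _).comp
        (hconvC (cylE n.1 w) (isClopen_cylE n.1 w).isClosed.isCompact (isClopen_cylE n.1 w).isOpen)
    refine le_of_tendsto_of_tendsto' herr (htc.add (hint.const_mul β)) fun k => ?_
    have h1 := (happ (g k)).le
    have h2 : entropy (μs (g k)) ≤ termN n.1 (μs (g k)) := entropy_le_termN (hp (g k)) n
    linarith
  have hfin : pressure φ β - β * ∫ x, φ x ∂μ ≤ entropy μ := by
    rw [entropy_eq]
    refine le_ciInf fun n => ?_
    have := hterm n
    linarith
  linarith

end Press

/-- `φ` has a freezing phase transition at `β_c` iff the pressure function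
is affine on `[β_c, ∞)` and on no larger half-line `[β, ∞)` with `β < β_c`; and in that case
`p_φ(β) = s_φ β + h_φ` for all `β ≥ β_c`. -/
theorem statement3 (d : ℕ) (hd : 1 ≤ d) (A : Type) [Fintype A] [TopologicalSpace A]
    [DiscreteTopology A] [MeasurableSpace A] [BorelSpace A]
    (φ : Cfg d A → ℝ) (hφ : Continuous φ) (βc : ℝ) :
    (FreezingPT φ βc ↔
      ((∃ a b : ℝ, ∀ β : ℝ, βc ≤ β → pressure φ β = a * β + b) ∧
        ∀ β' : ℝ, β' < βc →
          ¬ ∃ a b : ℝ, ∀ β : ℝ, β' ≤ β → pressure φ β = a * β + b)) ∧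
    (FreezingPT φ βc → ∀ β : ℝ, βc ≤ β → pressure φ β = sPhi φ * β + hPhi φ) := by
  classical
  obtain ⟨Cb, hCb0, hCb⟩ := exists_bound hφ
  -- rigidity of touching lines on an affine ray
  have rigid : ∀ {a b βs β1 : ℝ}, (∀ t, βs ≤ t → pressure φ t = a * t + b) → βs < β1 →
      ∀ {μ : Measure (Cfg d A)}, μ ∈ ES φ β1 →
        (∫ x, φ x ∂μ) = a ∧ entropy μ = b := by
    intro a b βs β1 haff hβ1 μ hμ
    have e0 : entropy μ + β1 * ∫ x, φ x ∂μ = a * β1 + b := by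
      rw [hμ.2.2, haff β1 hβ1.le]
    have f1 : entropy μ + βs * ∫ x, φ x ∂μ ≤ a * βs + b := by
      have := le_pressure φ hφ hμ.1 hμ.2.1 βs
      rwa [haff βs le_rfl] at this
    have f2 : entropy μ + (2*β1 - βs) * ∫ x, φ x ∂μ ≤ a * (2*β1 - βs) + b := by
      have := le_pressure φ hφ hμ.1 hμ.2.1 (2*β1 - βs)
      rwa [haff (2*β1 - βs) (by linarith)] at this
    have key1 : (β1 - βs) * ((∫ x, φ x ∂μ) - a) ≤ 0 := by nlinarith
    have key2 : 0 ≤ (β1 - βs) * ((∫ x, φ x ∂μ) - a) := by nlinarith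
    have hpos : 0 < β1 - βs := by linarith
    have hia : (∫ x, φ x ∂μ) = a := by nlinarith
    refine ⟨hia, ?_⟩
    rw [hia] at e0
    nlinarith
  -- equality of equilibrium sets strictly inside an affine ray
  have equalES : ∀ {a b βs : ℝ}, (∀ t, βs ≤ t → pressure φ t = a * t + b) →
      ∀ {β1 β2 : ℝ}, βs < β1 → βs < β2 → ES φ β1 = ES φ β2 := by
    have hsub : ∀ {a b βs : ℝ}, (∀ t, βs ≤ t → pressure φ t = a * t + b) →
        ∀ {β1 β2 : ℝ}, βs < β1 → βs < β2 → ES φ β1 ⊆ ES φ β2 := by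
      intro a b βs haff β1 β2 hβ1 hβ2 μ hμ
      obtain ⟨hia, hib⟩ := rigid haff hβ1 hμ
      refine ⟨hμ.1, hμ.2.1, ?_⟩
      rw [haff β2 hβ2.le, hia, hib]
      ring
    intro a b βs haff β1 β2 hβ1 hβ2
    exact Set.Subset.antisymm (hsub haff hβ1 hβ2) (hsub haff hβ2 hβ1)
  have approx_eq : ∀ (K x y : ℝ), 0 ≤ K → (∀ ε : ℝ, 0 < ε → |x - y| ≤ K * ε) → x = y := by
    intro K x y hK hxy
    have h0 : |x - y| ≤ 0 := by
      by_contra hc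
      push_neg at hc
      have h2 := hxy (|x - y| / (K + 1)) (by positivity)
      have h3 : K * (|x - y| / (K + 1)) < |x - y| := by
        rw [show K * (|x - y| / (K + 1)) = |x - y| * K / (K+1) by ring,
          div_lt_iff₀ (by linarith : (0:ℝ) < K + 1)]
        nlinarith
      linarith
    have := abs_nonneg (x - y)
    exact sub_eq_zero.mp (abs_eq_zero.mp (le_antisymm h0 this))
  by_cases hM : ∃ μ : Measure (Cfg d A), IsProbabilityMeasure μ ∧ Invariant μ
  case neg =>
    have hES : ∀ β, ES φ β = (∅ : Set (Measure (Cfg d A))) := fun β =>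
      Set.eq_empty_iff_forall_notMem.2 (fun μ hμ => hM ⟨μ, hμ.1, hμ.2.1⟩)
    have hFPT : ¬ FreezingPT φ βc := by
      rintro ⟨-, h2⟩
      exact h2 (βc - 1) (βc + 1) (by linarith) (by linarith) (by rw [hES, hES])
    constructor
    · constructor
      · intro h; exact absurd h hFPT
      · rintro ⟨-, hnon⟩
        refine absurd ?_ (hnon (βc - 1) (by linarith))
        exact ⟨0, 0, fun β _ => by rw [pressure_empty φ hM]; ring⟩
    · intro h; exact absurd h hFPT
  case pos =>
    -- main construction after FreezingPT : affine ray with data from an equilibrium state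
    have hFPTray : FreezingPT φ βc → ∃ μ0 : Measure (Cfg d A), μ0 ∈ ES φ (βc+1) ∧
        ∀ t, βc ≤ t → pressure φ t = (∫ x, φ x ∂μ0) * t + entropy μ0 := by
      rintro ⟨h1, -⟩
      obtain ⟨μ0, hμ0⟩ := exists_ES hφ hM (βc + 1)
      refine ⟨μ0, hμ0, ?_⟩
      have hray : ∀ t, βc < t → pressure φ t = (∫ x, φ x ∂μ0) * t + entropy μ0 := by
        intro t ht
        have hμt : μ0 ∈ ES φ t := by
          rw [h1 t (βc+1) ht (by linarith)]; exact hμ0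
        have he := hμt.2.2
        rw [← he]; ring
      intro t ht
      rcases eq_or_lt_of_le ht with heq | hlt
      · rw [← heq]
        refine approx_eq (Cb + |∫ x, φ x ∂μ0|) _ _ (by positivity) ?_
        intro ε hε
        have hA := pressure_lipschitz φ hφ hM hCb βc (βc + ε)
        have hB := pressure_lipschitz φ hφ hM hCb (βc + ε) βc
        have hC : pressure φ (βc + ε) = (∫ x, φ x ∂μ0) * (βc + ε) + entropy μ0 :=
          hray _ (by linarith)
        have habs1 : |βc - (βc + ε)| = ε := by
          rw [show βc - (βc+ε) = -ε by ring, abs_neg, abs_of_pos hε]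
        have habs2 : |(βc + ε) - βc| = ε := by
          rw [show (βc+ε) - βc = ε by ring, abs_of_pos hε]
        rw [habs1] at hA
        rw [habs2] at hB
        have hIe : (∫ x, φ x ∂μ0) * ε ≤ |∫ x, φ x ∂μ0| * ε :=
          mul_le_mul_of_nonneg_right (le_abs_self _) hε.le
        have hIe2 : -(|∫ x, φ x ∂μ0| * ε) ≤ (∫ x, φ x ∂μ0) * ε := by
          have := mul_le_mul_of_nonneg_right (neg_abs_le (∫ x, φ x ∂μ0)) hε.le
          linarith
        rw [abs_sub_le_iff]
        constructor
        · nlinarith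
        · nlinarith
      · exact hray t hlt
    constructor
    · constructor
      · -- forward
        intro hFPT
        obtain ⟨μ0, hμ0, hrayc⟩ := hFPTray hFPT
        refine ⟨⟨∫ x, φ x ∂μ0, entropy μ0, hrayc⟩, ?_⟩
        intro β' hβ'
        rintro ⟨a, b, haff⟩
        exact hFPT.2 ((β'+βc)/2) (βc+1) (by linarith) (by linarith)
          (equalES haff (by linarith) (by linarith))
      · -- converse
        rintro ⟨⟨a, b, haff⟩, hnon⟩
        constructor
        · intro β β' hβ hβ'
          exact equalES haff hβ hβ'
        · intro β1 β2 hβ1 hβ2 hESeq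
          obtain ⟨μ1, hμ1⟩ := exists_ES hφ hM β1
          have hμ1' : μ1 ∈ ES φ β2 := hESeq ▸ hμ1
          obtain ⟨hIa, hhb⟩ := rigid haff hβ2 hμ1'
          have hray2 : ∀ t, βc ≤ t → pressure φ t = (∫ x, φ x ∂μ1) * t + entropy μ1 := by
            intro t ht
            rw [haff t ht, hIa, hhb]
          have hβ12 : β1 < β2 := lt_trans hβ1 hβ2
          have hmid : ∀ t, β1 ≤ t → t ≤ β2 →
              pressure φ t = (∫ x, φ x ∂μ1) * t + entropy μ1 := by
            intro t ht1 ht2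
            set s := (β2 - t)/(β2 - β1) with hsdef
            have hs0 : 0 ≤ s := div_nonneg (by linarith) (by linarith)
            have hs1 : s ≤ 1 := by
              rw [hsdef, div_le_one (by linarith)]; linarith
            have hne : β2 - β1 ≠ 0 := sub_ne_zero.mpr hβ12.ne'
            have hts : t = s * β1 + (1 - s) * β2 := by
              rw [hsdef]
              field_simp
              ring
            have hup := pressure_convex φ hφ hM hs0 hs1 (β := β1) (δ := β2)
            rw [← hts] at hup
            have e1 : entropy μ1 + β1 * ∫ x, φ x ∂μ1 = pressure φ β1 := hμ1.2.2
            have e2 : entropy μ1 + β2 * ∫ x, φ x ∂μ1 = pressure φ β2 := hμ1'.2.2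
            have hlow := le_pressure φ hφ hμ1.1 hμ1.2.1 t
            have hcomb : s * pressure φ β1 + (1-s) * pressure φ β2 =
                entropy μ1 + t * ∫ x, φ x ∂μ1 := by
              rw [← e1, ← e2]
              rw [hts]
              ring
            have hPt : pressure φ t = entropy μ1 + t * ∫ x, φ x ∂μ1 :=
              le_antisymm (by linarith) hlow
            rw [hPt]; ring
          refine hnon β1 hβ1 ⟨∫ x, φ x ∂μ1, entropy μ1, fun t ht => ?_⟩
          rcases le_total t β2 with h' | h'
          · exact hmid t ht h'
          · exact hray2 t (by linarith)
    · -- moreover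
      intro hFPT β hβ
      obtain ⟨μ0, hμ0, hrayc⟩ := hFPTray hFPT
      -- sPhi
      have hSbdd : BddAbove {r : ℝ | ∃ μ : Measure (Cfg d A), IsProbabilityMeasure μ ∧
          Invariant μ ∧ r = ∫ x, φ x ∂μ} := by
        refine ⟨Cb, ?_⟩
        rintro r ⟨ν, hν1, hν2, rfl⟩
        exact (le_abs_self _).trans (integral_abs_le φ hCb hν1)
      have hIle : (∫ x, φ x ∂μ0) ≤ sPhi φ :=
        le_csSup hSbdd ⟨μ0, hμ0.1, hμ0.2.1, rfl⟩
      have hles : sPhi φ ≤ ∫ x, φ x ∂μ0 := by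
        refine csSup_le ⟨∫ x, φ x ∂μ0, μ0, hμ0.1, hμ0.2.1, rfl⟩ ?_
        rintro r ⟨ν, hν1, hν2, rfl⟩
        by_contra hc
        push_neg at hc
        set δ := (∫ x, φ x ∂ν) - ∫ x, φ x ∂μ0 with hδdef
        have hδpos : 0 < δ := by rw [hδdef]; linarith
        set t := max βc ((entropy μ0 - entropy ν)/δ + 1) with htdef
        have ht : βc ≤ t := le_max_left _ _
        have hkey := le_pressure φ hφ hν1 hν2 t
        rw [hrayc t ht] at hkey
        have hνI : (∫ x, φ x ∂ν) = (∫ x, φ x ∂μ0) + δ := by rw [hδdef]; ring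
        rw [hνI] at hkey
        have h5 : t * δ ≤ entropy μ0 - entropy ν := by nlinarith
        have h6 : (entropy μ0 - entropy ν)/δ + 1 ≤ t := le_max_right _ _
        have h8 : t ≤ (entropy μ0 - entropy ν)/δ := (le_div_iff₀ hδpos).mpr h5
        linarith
      have hIs : (∫ x, φ x ∂μ0) = sPhi φ := le_antisymm hIle hles
      have hμ0MM : μ0 ∈ MM φ := ⟨hμ0.1, hμ0.2.1, hIs⟩
      -- hPhi
      have hHbdd : BddAbove {r : ℝ | ∃ μ ∈ MM φ, r = entropy μ} := by
        refine ⟨Hmax d A, ?_⟩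
        rintro r ⟨η, hη, rfl⟩
        exact entropy_le_Hmax hη.1
      have hb1 : entropy μ0 ≤ hPhi φ := le_csSup hHbdd ⟨μ0, hμ0MM, rfl⟩
      have hb2 : hPhi φ ≤ entropy μ0 := by
        refine csSup_le ⟨entropy μ0, μ0, hμ0MM, rfl⟩ ?_
        rintro r ⟨η, hη, rfl⟩
        have hkey := le_pressure φ hφ hη.1 hη.2.1 βc
        rw [hrayc βc le_rfl] at hkey
        have hηI : (∫ x, φ x ∂η) = ∫ x, φ x ∂μ0 := hη.2.2.trans hIs.symm
        rw [hηI] at hkey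
        nlinarith
      have hbh : entropy μ0 = hPhi φ := le_antisymm hb1 hb2
      rw [hrayc β hβ, hIs, hbh]


end Freezing
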